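/- Let X be a real N×P matrix and C a real N×L matrix such that the block matrix W₁ = [X C] has full column rank P+L. Then both X and C have full column rank, the matrices Xᵀ(I_N − P_C)X and Cᵀ(I_N − P_X)C are invertible, and for any β_X ∈ ℝ^P, β_C ∈ ℝ^L, ε ∈ ℝ^N and y = Xβ_X + Cβ_C + ε, the estimators β̂_X := (Xᵀ(I_N − P_C)X)⁻¹Xᵀ(I_N − P_C)y and β̂_C := (Cᵀ(I_N − P_X)C)⁻¹Cᵀ(I_N − P_X)y satisfy β̂_X − β_X = (Xᵀ(I_N − P_C)X)⁻¹Xᵀ(I_N − P_C)ε and β̂_C − β_C = (Cᵀ(I_N − P_X)C)⁻¹Cᵀ(I_N − P_X)ε. -/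

import Mathlib

open Matrix

/-- The orthogonal projection matrix onto the column space of `M`:
`P_M = M (Mᵀ M)⁻¹ Mᵀ`. -/
noncomputable def proj {N K : ℕ} (M : Matrix (Fin N) (Fin K) ℝ) :
    Matrix (Fin N) (Fin N) ℝ :=
  M * (Mᵀ * M)⁻¹ * Mᵀ

lemma mulVec_inj_of_ker {m k : ℕ} {A : Matrix (Fin m) (Fin k) ℝ}
    (h : ∀ v, A *ᵥ v = 0 → v = 0) : Function.Injective A.mulVec := fun v w hvw =>
  sub_eq_zero.mp (h _ (by rw [mulVec_sub, hvw, sub_self]))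

lemma gram_isUnit {m k : ℕ} {A : Matrix (Fin m) (Fin k) ℝ}
    (h : Function.Injective A.mulVec) : IsUnit (Aᵀ * A) := by
  rw [← Matrix.mulVec_injective_iff_isUnit]
  apply mulVec_inj_of_ker
  intro v hv
  have h2 : v ⬝ᵥ ((Aᵀ * A) *ᵥ v) = (A *ᵥ v) ⬝ᵥ (A *ᵥ v) := by
    rw [← Matrix.mulVec_mulVec, Matrix.dotProduct_mulVec, Matrix.vecMul_transpose]
  rw [hv, dotProduct_zero] at h2
  have h1 : A *ᵥ v = 0 := dotProduct_self_eq_zero.mp h2.symm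
  have := h (a₁ := v) (a₂ := 0) (by simpa using h1)
  simpa using this

lemma side {N P L : ℕ} (X : Matrix (Fin N) (Fin P) ℝ) (C : Matrix (Fin N) (Fin L) ℝ)
    (hinj : ∀ v w, X *ᵥ v + C *ᵥ w = 0 → v = 0 ∧ w = 0) :
    IsUnit (Xᵀ * ((1 : Matrix (Fin N) (Fin N) ℝ) - proj C) * X) ∧
      Xᵀ * ((1 : Matrix (Fin N) (Fin N) ℝ) - proj C) * C = 0 := by
  have hC : Function.Injective C.mulVec := by
    apply mulVec_inj_of_ker
    intro v hv
    exact (hinj 0 v (by simpa using hv)).2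
  have hCC : IsUnit (Cᵀ * C) := gram_isUnit hC
  have hCCdet : IsUnit (Cᵀ * C).det := (Matrix.isUnit_iff_isUnit_det _).mp hCC
  set Q : Matrix (Fin N) (Fin N) ℝ := 1 - proj C with hQ
  have hPC : proj C * C = C := by
    have h1 : proj C * C = C * ((Cᵀ * C)⁻¹ * (Cᵀ * C)) := by
      simp [proj, Matrix.mul_assoc]
    rw [h1, Matrix.nonsing_inv_mul _ hCCdet, Matrix.mul_one]
  have hQC : Q * C = 0 := by
    rw [hQ, Matrix.sub_mul, Matrix.one_mul, hPC, sub_self]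
  have hQP : Q * proj C = 0 := by
    rw [proj, ← Matrix.mul_assoc, ← Matrix.mul_assoc, hQC, Matrix.zero_mul, Matrix.zero_mul]
  have hQidem : Q * Q = Q := by
    calc Q * Q = Q * 1 - Q * proj C := by rw [← Matrix.mul_sub, ← hQ]
      _ = Q := by rw [hQP, Matrix.mul_one, sub_zero]
  have hQsymm : Qᵀ = Q := by
    rw [hQ, transpose_sub, transpose_one, proj, transpose_mul, transpose_mul,
      transpose_transpose, Matrix.transpose_nonsing_inv, transpose_mul, transpose_transpose,
      Matrix.mul_assoc]
  have hQX : Function.Injective (Q * X).mulVec := by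
    apply mulVec_inj_of_ker
    intro v hv
    have e : Q * X = X - C * ((Cᵀ * C)⁻¹ * (Cᵀ * X)) := by
      simp [hQ, proj, Matrix.sub_mul, Matrix.mul_assoc]
    have h2 : X *ᵥ v + C *ᵥ (-(((Cᵀ * C)⁻¹ * (Cᵀ * X)) *ᵥ v)) = (Q * X) *ᵥ v := by
      rw [e, Matrix.sub_mulVec, mulVec_neg, mulVec_mulVec, sub_eq_add_neg]
    exact (hinj _ _ (h2.trans hv)).1
  have key : (Q * X)ᵀ * (Q * X) = Xᵀ * Q * X := by
    rw [transpose_mul, hQsymm, Matrix.mul_assoc Xᵀ Q (Q * X), ← Matrix.mul_assoc Q Q X,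
      hQidem, ← Matrix.mul_assoc]
  refine ⟨?_, ?_⟩
  · rw [← key]; exact gram_isUnit hQX
  · rw [Matrix.mul_assoc, hQC, Matrix.mul_zero]

lemma est {N K J : ℕ} (A : Matrix (Fin K) (Fin N) ℝ) (X : Matrix (Fin N) (Fin K) ℝ)
    (C : Matrix (Fin N) (Fin J) ℝ) (hU : IsUnit (A * X)) (hZ : A * C = 0)
    (βX : Fin K → ℝ) (βC : Fin J → ℝ) (ε y : Fin N → ℝ)
    (hy : y = X *ᵥ βX + C *ᵥ βC + ε) :
    (A * X)⁻¹ *ᵥ (A *ᵥ y) - βX = (A * X)⁻¹ *ᵥ (A *ᵥ ε) := by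
  have hdet := (Matrix.isUnit_iff_isUnit_det _).mp hU
  have h1 : A *ᵥ (X *ᵥ βX + C *ᵥ βC + ε) = (A * X) *ᵥ βX + A *ᵥ ε := by
    rw [Matrix.mulVec_add, Matrix.mulVec_add, Matrix.mulVec_mulVec, Matrix.mulVec_mulVec, hZ,
      Matrix.zero_mulVec, add_zero]
  rw [hy, h1, Matrix.mulVec_add, Matrix.mulVec_mulVec, Matrix.nonsing_inv_mul _ hdet,
    Matrix.one_mulVec, add_sub_cancel_left]

lemma inj_of_rank {N P L : ℕ} (X : Matrix (Fin N) (Fin P) ℝ) (C : Matrix (Fin N) (Fin L) ℝ)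
    (hW : (Matrix.fromCols X C).rank = P + L) :
    ∀ v w, X *ᵥ v + C *ᵥ w = 0 → v = 0 ∧ w = 0 := by
  set W := Matrix.fromCols X C with hWdef
  have hr : Module.finrank ℝ (LinearMap.range W.mulVecLin) = P + L := hW
  have hd : Module.finrank ℝ ((Fin P ⊕ Fin L) → ℝ) = P + L := by
    simp [Module.finrank_pi]
  have hker : Module.finrank ℝ (LinearMap.ker W.mulVecLin) = 0 := by
    have := LinearMap.finrank_range_add_finrank_ker W.mulVecLin
    omega
  have hker' : LinearMap.ker W.mulVecLin = ⊥ := Submodule.finrank_eq_zero.mp hker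
  intro v w h
  have hz : W.mulVecLin (Sum.elim v w) = 0 := by
    simpa [hWdef, Matrix.fromCols_mulVec_sumElim] using h
  have h0 : Sum.elim v w = 0 := by
    have hm : Sum.elim v w ∈ LinearMap.ker W.mulVecLin := hz
    rwa [hker', Submodule.mem_bot] at hm
  constructor
  · funext i; exact congrFun h0 (Sum.inl i)
  · funext i; exact congrFun h0 (Sum.inr i)


/-- If `W₁ = [X, C]` has full column rank, then `X` and `C` have full column rank,
`Xᵀ(I - P_C)X` and `Cᵀ(I - P_X)C` are invertible, and with `y = Xβ_X + Cβ_C + ε`, the OLS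
estimators satisfy `β̂_X - β_X = (Xᵀ(I - P_C)X)⁻¹ Xᵀ(I - P_C) ε` and
`β̂_C - β_C = (Cᵀ(I - P_X)C)⁻¹ Cᵀ(I - P_X) ε`. -/
theorem ols_estimator_error_repr
    (N P L : ℕ) (X : Matrix (Fin N) (Fin P) ℝ) (C : Matrix (Fin N) (Fin L) ℝ)
    (hW : (Matrix.fromCols X C).rank = P + L)
    (βX : Fin P → ℝ) (βC : Fin L → ℝ) (ε : Fin N → ℝ) (y : Fin N → ℝ)
    (hy : y = X.mulVec βX + C.mulVec βC + ε) :
    X.rank = P ∧ C.rank = L ∧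
    IsUnit (Xᵀ * ((1 : Matrix (Fin N) (Fin N) ℝ) - proj C) * X) ∧
    IsUnit (Cᵀ * ((1 : Matrix (Fin N) (Fin N) ℝ) - proj X) * C) ∧
    ((Xᵀ * ((1 : Matrix (Fin N) (Fin N) ℝ) - proj C) * X)⁻¹).mulVec
        ((Xᵀ * ((1 : Matrix (Fin N) (Fin N) ℝ) - proj C)).mulVec y) - βX
      = ((Xᵀ * ((1 : Matrix (Fin N) (Fin N) ℝ) - proj C) * X)⁻¹).mulVec
        ((Xᵀ * ((1 : Matrix (Fin N) (Fin N) ℝ) - proj C)).mulVec ε) ∧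
    ((Cᵀ * ((1 : Matrix (Fin N) (Fin N) ℝ) - proj X) * C)⁻¹).mulVec
        ((Cᵀ * ((1 : Matrix (Fin N) (Fin N) ℝ) - proj X)).mulVec y) - βC
      = ((Cᵀ * ((1 : Matrix (Fin N) (Fin N) ℝ) - proj X) * C)⁻¹).mulVec
        ((Cᵀ * ((1 : Matrix (Fin N) (Fin N) ℝ) - proj X)).mulVec ε) := by
  have hinj := inj_of_rank X C hW
  have hinj' : ∀ w v, C *ᵥ w + X *ᵥ v = 0 → w = 0 ∧ v = 0 := fun w v h =>
    (hinj v w (by rwa [add_comm])).symm.imp id id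
  have hXinj : Function.Injective X.mulVec :=
    mulVec_inj_of_ker (fun v hv => (hinj v 0 (by simpa using hv)).1)
  have hCinj : Function.Injective C.mulVec :=
    mulVec_inj_of_ker (fun w hw => (hinj 0 w (by simpa using hw)).2)
  have hrX : X.rank = P := by
    have : Module.finrank ℝ (LinearMap.range X.mulVecLin) =
        Module.finrank ℝ (Fin P → ℝ) :=
      LinearMap.finrank_range_of_inj (f := X.mulVecLin) (by simpa [← Matrix.coe_mulVecLin] using hXinj)
    simpa [Matrix.rank, Module.finrank_pi] using this
  have hrC : C.rank = L := by
    have : Module.finrank ℝ (LinearMap.range C.mulVecLin) =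
        Module.finrank ℝ (Fin L → ℝ) :=
      LinearMap.finrank_range_of_inj (f := C.mulVecLin) (by simpa [← Matrix.coe_mulVecLin] using hCinj)
    simpa [Matrix.rank, Module.finrank_pi] using this
  obtain ⟨hU1, hZ1⟩ := side X C hinj
  obtain ⟨hU2, hZ2⟩ := side C X hinj'
  refine ⟨hrX, hrC, hU1, hU2, ?_, ?_⟩
  · exact est (Xᵀ * (1 - proj C)) X C hU1 hZ1 βX βC ε y hy
  · exact est (Cᵀ * (1 - proj X)) C X hU2 hZ2 βC βX ε y
      (by rw [hy]; rw [add_comm (X.mulVec βX) (C.mulVec βC)])
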